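/- Let W_k have rank k, and let W_{k,L} be any left inverse of W_k (i.e., W_{k,L} W_k = E_k). Then the unique t_pred ∈ ℝ^k for which l_pred = (t_pred, l')ᵀ ∈ ℒ attains d(ℒ, 𝒫) (i.e., there exists p₀ ∈ 𝒫 with d(l_pred, p₀) = min_{l∈ℒ, p∈𝒫} d(l,p)) is given by t_pred = −W_{k,L} · W_k(W_kᵀW_k)⁻¹W_kᵀ · W' l'. -/

import Mathlib

open Matrix

/-- Distance between two subsets of a metric space. -/
noncomputable def setDist {X : Type*} [MetricSpace X] (A B : Set X) : ℝ :=
  sInf (Set.image2 dist A B)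

namespace Stmt8Aux

/-- identity map into `EuclideanSpace`. -/
def toE {m : ℕ} (v : Fin m → ℝ) : EuclideanSpace ℝ (Fin m) := WithLp.toLp 2 v

lemma inner_toE {m : ℕ} (x y : Fin m → ℝ) :
    inner (𝕜 := ℝ) (toE x) (toE y) = x ⬝ᵥ y := by
  simp [toE, PiLp.inner_apply, dotProduct, mul_comm, RCLike.inner_apply]

lemma mulVec_inj_of_li {m n : ℕ} (A : Matrix (Fin m) (Fin n) ℝ)
    (h : LinearIndependent ℝ (fun j : Fin n => (WithLp.toLp 2 (Aᵀ j) : EuclideanSpace ℝ (Fin m)))) :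
    Function.Injective A.mulVec := by
  have hker : ∀ x, A.mulVec x = 0 → x = 0 := by
    intro x hx
    have hsum : (∑ j, x j • (WithLp.toLp 2 (Aᵀ j) : EuclideanSpace ℝ (Fin m))) = 0 := by
      ext i
      have : ∑ j, x j * A i j = 0 := by
        have := congr_fun hx i
        simpa [Matrix.mulVec, dotProduct, mul_comm] using this
      simpa [Finset.sum_apply, Matrix.transpose_apply] using this
    have := Fintype.linearIndependent_iff.mp h x hsum
    funext j; exact this j
  intro x y hxy
  have : A.mulVec (x - y) = 0 := by
    rw [Matrix.mulVec_sub, hxy, sub_self]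
  exact sub_eq_zero.mp (hker _ this)

lemma gram_isUnit {m n : ℕ} (A : Matrix (Fin m) (Fin n) ℝ)
    (hA : Function.Injective A.mulVec) : IsUnit (Aᵀ * A).det := by
  rw [← Matrix.isUnit_iff_isUnit_det, ← Matrix.mulVec_injective_iff_isUnit]
  have hker : ∀ x, (Aᵀ * A).mulVec x = 0 → x = 0 := by
    intro x hx
    have h1 : x ⬝ᵥ (Aᵀ * A).mulVec x = (A.mulVec x) ⬝ᵥ (A.mulVec x) := by
      rw [← Matrix.mulVec_mulVec, Matrix.dotProduct_mulVec,
        ← Matrix.transpose_transpose A, Matrix.vecMul_transpose, Matrix.transpose_transpose]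
    have h2 : (A.mulVec x) ⬝ᵥ (A.mulVec x) = 0 := by
      rw [← h1, hx, dotProduct_zero]
    have h3 : A.mulVec x = 0 := by
      funext i
      have hnn : ∀ i, 0 ≤ A.mulVec x i * A.mulVec x i := fun i => mul_self_nonneg _
      have := (Finset.sum_eq_zero_iff_of_nonneg (fun i _ => hnn i)).mp h2 i (Finset.mem_univ i)
      have := mul_self_eq_zero.mp this
      simpa using this
    have := hA (a₁ := x) (a₂ := 0) (by simpa using h3)
    simpa using this
  intro x y hxy
  have : (Aᵀ * A).mulVec (x - y) = 0 := by rw [Matrix.mulVec_sub, hxy, sub_self]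
  exact sub_eq_zero.mp (hker _ this)

end Stmt8Aux

open Stmt8Aux

/-- Proposition 4, case 2 with `rank(W_k) = k`. -/
theorem stmt_8 {k r n : ℕ} (hk : 1 ≤ k) (hr : 1 ≤ r)
    (P : Matrix (Fin (k + r)) (Fin n) ℝ)
    (hP : LinearIndependent ℝ (fun j : Fin n => (WithLp.toLp 2 (Pᵀ j) : EuclideanSpace ℝ (Fin (k + r)))))
    (Psub : Submodule ℝ (EuclideanSpace ℝ (Fin (k + r))))
    (hPsub : Psub = Submodule.span ℝ
      (Set.range fun j : Fin n => (WithLp.toLp 2 (Pᵀ j) : EuclideanSpace ℝ (Fin (k + r)))))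
    (W : Matrix (Fin (k + r)) (Fin (k + r)) ℝ)
    (hW : W = P * (Pᵀ * P)⁻¹ * Pᵀ - 1)
    (Wk : Matrix (Fin (k + r)) (Fin k) ℝ) (hWk : Wk = fun i j => W i (Fin.castAdd r j))
    (W' : Matrix (Fin (k + r)) (Fin r) ℝ) (hW' : W' = fun i j => W i (Fin.natAdd k j))
    (l' : Fin r → ℝ)
    (L : Set (EuclideanSpace ℝ (Fin (k + r))))
    (hL : L = {x : EuclideanSpace ℝ (Fin (k + r)) | ∃ t : Fin k → ℝ, x = Fin.append t l'})
    (hrank : Wk.rank = k)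
    (WkL : Matrix (Fin k) (Fin (k + r)) ℝ) (hWkL : WkL * Wk = 1) :
    ∀ (tpred : Fin k → ℝ) (lpred : EuclideanSpace ℝ (Fin (k + r))),
      lpred = Fin.append tpred l' →
      ((∃ p₀ ∈ Psub, dist lpred p₀ = setDist L ↑Psub) ↔
        tpred = -((WkL * (Wk * (Wkᵀ * Wk)⁻¹ * Wkᵀ)).mulVec (W'.mulVec l'))) := by
  intro tpred lpred hlpred
  set Q : Matrix (Fin (k + r)) (Fin (k + r)) ℝ := P * (Pᵀ * P)⁻¹ * Pᵀ with hQ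
  -- basic invertibility facts
  have hPinj : Function.Injective P.mulVec := mulVec_inj_of_li P hP
  have hPPdet : IsUnit (Pᵀ * P).det := gram_isUnit P hPinj
  have hPtQ : Pᵀ * Q = Pᵀ := by
    rw [hQ, ← Matrix.mul_assoc, ← Matrix.mul_assoc, Matrix.mul_nonsing_inv _ hPPdet,
      Matrix.one_mul]
  -- the projection lands in Psub
  have hQmem : ∀ x : Fin (k + r) → ℝ, toE (Q.mulVec x) ∈ Psub := by
    intro x
    rw [hPsub]
    have h1 : Q.mulVec x = P.mulVec (((Pᵀ * P)⁻¹ * Pᵀ).mulVec x) := by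
      rw [Matrix.mulVec_mulVec, hQ, Matrix.mul_assoc]
    rw [h1]
    set y := ((Pᵀ * P)⁻¹ * Pᵀ).mulVec x with hy
    have hPy : toE (P.mulVec y) = ∑ j, y j • (WithLp.toLp 2 (Pᵀ j) : EuclideanSpace ℝ (Fin (k + r))) := by
      ext i
      simp [toE, Matrix.mulVec, dotProduct, Finset.sum_apply, mul_comm]
    rw [hPy]
    exact Submodule.sum_smul_mem _ _ (fun j _ => Submodule.subset_span ⟨j, rfl⟩)
  -- orthogonality of the residual to Psub
  have horthQ : ∀ x : Fin (k + r) → ℝ, ∀ p ∈ Psub,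
      inner (𝕜 := ℝ) p (toE (x - Q.mulVec x)) = 0 := by
    intro x p hp
    have hPt : Pᵀ.mulVec (x - Q.mulVec x) = 0 := by
      rw [Matrix.mulVec_sub, Matrix.mulVec_mulVec, hPtQ, sub_self]
    rw [hPsub] at hp
    refine Submodule.span_induction ?_ ?_ ?_ ?_ hp
    · rintro p ⟨j, rfl⟩
      have h1 : inner (𝕜 := ℝ) (toE (Pᵀ j))
          (toE (x - Q.mulVec x)) = (Pᵀ j) ⬝ᵥ (x - Q.mulVec x) := inner_toE _ _
      have h2 : (Pᵀ j) ⬝ᵥ (x - Q.mulVec x) = Pᵀ.mulVec (x - Q.mulVec x) j := rfl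
      exact h1.trans (by rw [h2, hPt]; rfl)
    · exact inner_zero_left _
    · intro a b _ _ iha ihb
      rw [inner_add_left, iha, ihb, add_zero]
    · intro a p _ ih
      rw [real_inner_smul_left, ih, mul_zero]
  -- residual equals -(W x)
  have hWx : ∀ x : Fin (k + r) → ℝ, W.mulVec x = Q.mulVec x - x := by
    intro x
    rw [hW, Matrix.sub_mulVec, Matrix.one_mulVec]
  have hres : ∀ x : Fin (k + r) → ℝ, toE (x - Q.mulVec x) = -(toE (W.mulVec x)) := by
    intro x
    have : x - Q.mulVec x = -(W.mulVec x) := by rw [hWx, neg_sub]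
    exact congrArg toE this
  have hresnorm : ∀ x : Fin (k + r) → ℝ,
      ‖toE (x - Q.mulVec x)‖ = ‖toE (W.mulVec x)‖ := by
    intro x; rw [hres, norm_neg]
  -- key distance facts
  have key1 : ∀ (x : Fin (k + r) → ℝ), ∀ p ∈ Psub,
      ‖toE (W.mulVec x)‖ ≤ dist (toE x) p := by
    intro x p hp
    have hq := hQmem x
    set v := toE (x - Q.mulVec x) with hv
    set w := toE (Q.mulVec x) - p with hw
    have hsplit : toE x - p = v + w := by
      rw [hv, hw]
      have : toE (x - Q.mulVec x) = toE x - toE (Q.mulVec x) := rfl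
      rw [this, sub_add_sub_cancel]
    have hwmem : toE (Q.mulVec x) - p ∈ Psub := Submodule.sub_mem _ hq hp
    have hinner : inner (𝕜 := ℝ) v w = 0 := by
      rw [real_inner_comm]
      exact horthQ x _ hwmem
    have hpyth : ‖v + w‖ * ‖v + w‖ = ‖v‖ * ‖v‖ + ‖w‖ * ‖w‖ :=
      norm_add_sq_eq_norm_sq_add_norm_sq_real hinner
    have h1 : ‖v‖ ≤ ‖v + w‖ := by
      nlinarith [norm_nonneg w, norm_nonneg v, norm_nonneg (v + w)]
    rw [dist_eq_norm, ← hresnorm x, hsplit]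
    exact h1
  have key2 : ∀ (x : Fin (k + r) → ℝ),
      ∃ q ∈ Psub, dist (toE x) q = ‖toE (W.mulVec x)‖ := by
    intro x
    refine ⟨toE (Q.mulVec x), hQmem x, ?_⟩
    rw [dist_eq_norm, ← hresnorm x]
    rfl
  -- decomposition of W (append t l')
  set c : Fin (k + r) → ℝ := W'.mulVec l' with hc
  have hdec : ∀ t : Fin k → ℝ,
      W.mulVec (Fin.append t l') = Wk.mulVec t + c := by
    intro t
    funext i
    show ∑ j, W i j * Fin.append t l' j = Wk.mulVec t i + c i
    rw [Fin.sum_univ_add (f := fun j => W i j * Fin.append t l' j)]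
    congr 1
    · exact Finset.sum_congr rfl fun j _ => by rw [hWk, Fin.append_left]
    · exact Finset.sum_congr rfl fun j _ => by rw [hW', Fin.append_right]
  -- injectivity of Wk and invertibility of its Gram matrix
  have hWkinj : Function.Injective Wk.mulVec := by
    intro a b hab
    have h1 : (WkL * Wk).mulVec a = (WkL * Wk).mulVec b := by
      rw [← Matrix.mulVec_mulVec, ← Matrix.mulVec_mulVec, hab]
    simpa [hWkL, Matrix.one_mulVec] using h1
  have hGdet : IsUnit (Wkᵀ * Wk).det := gram_isUnit Wk hWkinj
  set t₀ : Fin k → ℝ := -(((Wkᵀ * Wk)⁻¹ * Wkᵀ).mulVec c) with ht₀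
  have horth2 : Wkᵀ.mulVec (Wk.mulVec t₀ + c) = 0 := by
    rw [Matrix.mulVec_add, Matrix.mulVec_mulVec, ht₀, Matrix.mulVec_neg,
      Matrix.mulVec_mulVec, ← Matrix.mul_assoc,
      Matrix.mul_nonsing_inv _ hGdet, Matrix.one_mul, neg_add_cancel]
  have pyth : ∀ t : Fin k → ℝ,
      ‖toE (Wk.mulVec t + c)‖ ^ 2
        = ‖toE (Wk.mulVec (t - t₀))‖ ^ 2 + ‖toE (Wk.mulVec t₀ + c)‖ ^ 2 := by
    intro t
    have hsplit : toE (Wk.mulVec t + c)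
        = toE (Wk.mulVec (t - t₀)) + toE (Wk.mulVec t₀ + c) := by
      have : Wk.mulVec t + c = Wk.mulVec (t - t₀) + (Wk.mulVec t₀ + c) := by
        rw [Matrix.mulVec_sub]; abel
      exact congrArg toE this
    rw [hsplit, pow_two, pow_two, pow_two]
    refine norm_add_sq_eq_norm_sq_add_norm_sq_real ?_
    rw [inner_toE]
    have h1 : (t - t₀) ⬝ᵥ (Wkᵀ.mulVec (Wk.mulVec t₀ + c))
        = (Wk.mulVec (t - t₀)) ⬝ᵥ (Wk.mulVec t₀ + c) := by
      rw [Matrix.dotProduct_mulVec, Matrix.vecMul_transpose]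
    rw [← h1, horth2, dotProduct_zero]
  set D : ℝ := ‖toE (Wk.mulVec t₀ + c)‖ with hD
  have hLBt : ∀ t : Fin k → ℝ, D ≤ ‖toE (Wk.mulVec t + c)‖ := by
    intro t
    nlinarith [pyth t, norm_nonneg (toE (Wk.mulVec (t - t₀))),
      norm_nonneg (toE (Wk.mulVec t + c)), norm_nonneg (toE (Wk.mulVec t₀ + c))]
  have hWl : ∀ t : Fin k → ℝ,
      ‖toE (W.mulVec (Fin.append t l'))‖ = ‖toE (Wk.mulVec t + c)‖ := by
    intro t; rw [hdec]
  -- computation of setDist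
  have hmem : D ∈ Set.image2 dist L (↑Psub : Set (EuclideanSpace ℝ (Fin (k + r)))) := by
    obtain ⟨q₀, hq₀, hdq₀⟩ := key2 (Fin.append t₀ l')
    refine ⟨toE (Fin.append t₀ l'), ?_, q₀, hq₀, ?_⟩
    · rw [hL]; exact ⟨t₀, rfl⟩
    · rw [hdq₀, hWl t₀]
  have hlb : ∀ z ∈ Set.image2 dist L (↑Psub : Set (EuclideanSpace ℝ (Fin (k + r)))),
      D ≤ z := by
    rintro z ⟨l, hl, p, hp, rfl⟩
    rw [hL] at hl
    obtain ⟨t, ht⟩ := hl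
    obtain rfl : l = toE (Fin.append t l') := by simp [toE, ← ht]
    calc D ≤ ‖toE (Wk.mulVec t + c)‖ := hLBt t
      _ = ‖toE (W.mulVec (Fin.append t l'))‖ := (hWl t).symm
      _ ≤ dist (toE (Fin.append t l')) p := key1 _ p hp
  have hsd : setDist L (↑Psub : Set (EuclideanSpace ℝ (Fin (k + r)))) = D :=
    le_antisymm (csInf_le ⟨D, fun z hz => hlb z hz⟩ hmem) (le_csInf ⟨D, hmem⟩ hlb)
  -- the closed-form expression equals t₀
  have hform : -((WkL * (Wk * (Wkᵀ * Wk)⁻¹ * Wkᵀ)).mulVec (W'.mulVec l')) = t₀ := by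
    have h1 : WkL * (Wk * (Wkᵀ * Wk)⁻¹ * Wkᵀ) = (Wkᵀ * Wk)⁻¹ * Wkᵀ := by
      rw [Matrix.mul_assoc Wk, ← Matrix.mul_assoc WkL, hWkL, Matrix.one_mul]
    rw [h1, ht₀, hc]
  -- uniqueness of the minimizer
  have huniq : ∀ t : Fin k → ℝ, ‖toE (Wk.mulVec t + c)‖ = D → t = t₀ := by
    intro t ht
    have h0 : ‖toE (Wk.mulVec (t - t₀))‖ ^ 2 = 0 := by
      have hp := pyth t
      rw [ht] at hp
      linarith
    have h1 : ‖toE (Wk.mulVec (t - t₀))‖ = 0 := sq_eq_zero_iff.mp h0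
    have h2' : toE (Wk.mulVec (t - t₀)) = (0 : EuclideanSpace ℝ (Fin (k + r))) :=
      norm_eq_zero.mp h1
    have h2 : Wk.mulVec (t - t₀) = 0 := congrArg WithLp.ofLp h2'
    have h3 : Wk.mulVec t = Wk.mulVec t₀ :=
      sub_eq_zero.mp (by rw [← Matrix.mulVec_sub]; exact h2)
    exact hWkinj h3
  constructor
  · rintro ⟨p₀, hp₀, hdp⟩
    have h1 : ‖toE (Wk.mulVec tpred + c)‖ ≤ D := by
      calc ‖toE (Wk.mulVec tpred + c)‖
          = ‖toE (W.mulVec (Fin.append tpred l'))‖ := (hWl tpred).symm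
        _ ≤ dist lpred p₀ := by rw [show lpred = toE (Fin.append tpred l') by simp [toE, ← hlpred]]; exact key1 _ p₀ hp₀
        _ = D := by rw [hdp, hsd]
    have h2 : ‖toE (Wk.mulVec tpred + c)‖ = D := le_antisymm h1 (hLBt tpred)
    rw [huniq tpred h2, ← hform]
  · intro htp
    have htp0 : tpred = t₀ := by rw [htp, hform]
    obtain ⟨q₀, hq₀, hdq₀⟩ := key2 (Fin.append t₀ l')
    refine ⟨q₀, hq₀, ?_⟩
    rw [show lpred = toE (Fin.append tpred l') by simp [toE, ← hlpred], htp0]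
    calc dist (toE (Fin.append t₀ l')) q₀ = ‖toE (W.mulVec (Fin.append t₀ l'))‖ := hdq₀
      _ = D := hWl t₀
      _ = setDist L (↑Psub : Set (EuclideanSpace ℝ (Fin (k + r)))) := hsd.symm
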